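/- Under the Setup below, for every integer 0 ≤ i ≤ n-2 one has -2(n-1) < f(i) < n-1; consequently -⌊f(i)/(n-1)⌋ ∈ {0, 1, 2}, i.e., {0, 1, …, n-2} is the disjoint union F_0 ⊎ F_1 ⊎ F_2. -/
import Mathlib


set_option maxHeartbeats 1000000 in
/-- Setup as in Statement 12, with `f(i) := a·r_i - (xv-1)·p_i + x·a·q_i`:
for every `0 ≤ i ≤ n-2` one has `-2(n-1) < f(i) < n-1`; consequently
`-⌊f(i)/(n-1)⌋ ∈ {0, 1, 2}`, i.e. `{0, …, n-2}` is the disjoint union `F_0 ⊎ F_1 ⊎ F_2`. -/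
theorem stmt_15 (a x u v : ℕ) (ha : 3 ≤ a) (hax : a ≤ x)
    (hu : u ≤ a - 3) (hv1 : u + 2 ≤ v) (hv2 : v ≤ a - 1) (hv3 : v * x ≤ a * (x - 1))
    (n : ℕ) (hn : n = x * ((a + 1) * (v - 1) + 1))
    (i : ℤ) (hi0 : 0 ≤ i) (hi1 : i ≤ (n : ℤ) - 2)
    (r p q : ℤ)
    (hdecomp : i = ((n : ℤ) / x) * r + ((v : ℤ) - 1) * p + q)
    (hr : 0 ≤ r ∧ r < (x : ℤ))
    (hpq : 0 ≤ ((v : ℤ) - 1) * p + q ∧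
      ((v : ℤ) - 1) * p + q < ((a : ℤ) + 1) * ((v : ℤ) - 1) + 1)
    (hp : 0 ≤ p ∧ p ≤ (a : ℤ) + 1) (hq : 0 ≤ q ∧ q < (v : ℤ) - 1 ∨ q = 0)
    (hpa : p = (a : ℤ) + 1 → q = 0)
    (f : ℤ) (hf : f = (a : ℤ) * r - ((x : ℤ) * v - 1) * p + (x : ℤ) * a * q) :
    (-2 * ((n : ℤ) - 1) < f ∧ f < (n : ℤ) - 1) ∧
      (-(f / ((n : ℤ) - 1)) = 0 ∨ -(f / ((n : ℤ) - 1)) = 1 ∨ -(f / ((n : ℤ) - 1)) = 2) := by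
  obtain ⟨hr0, hr1⟩ := hr
  obtain ⟨hp0, hp1⟩ := hp
  have hx3 : (3:ℤ) ≤ x := by exact_mod_cast ha.trans hax
  have ha3 : (3:ℤ) ≤ a := by exact_mod_cast ha
  have hv2' : (2:ℤ) ≤ v := by
    have : 2 ≤ v := le_trans (Nat.le_add_left 2 u) hv1
    exact_mod_cast this
  have hq' : 0 ≤ q ∧ q ≤ (v:ℤ) - 2 := by rcases hq with ⟨h1, h2⟩ | h <;> constructor <;> omega
  obtain ⟨hq0, hq1⟩ := hq'
  have hnZ : (n:ℤ) = (x:ℤ) * (((a:ℤ) + 1) * ((v:ℤ) - 1) + 1) := by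
    subst hn
    have hv1' : 1 ≤ v := by omega
    push_cast [Nat.cast_sub hv1']
    ring
  have hxv : (6:ℤ) ≤ (x:ℤ) * v :=
    le_trans (by norm_num) (mul_le_mul hx3 hv2' (by norm_num) (by linarith))
  have hxa : (0:ℤ) ≤ (x:ℤ) * a := by positivity
  have hub : f < (n:ℤ) - 1 := by
    have t1 : 0 ≤ ((x:ℤ) * v - 1) * p := mul_nonneg (by linarith) hp0
    have t2 : (a:ℤ) * r ≤ (a:ℤ) * ((x:ℤ) - 1) :=
      mul_le_mul_of_nonneg_left (by linarith) (by linarith)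
    have t3 : (x:ℤ) * a * q ≤ (x:ℤ) * a * ((v:ℤ) - 2) :=
      mul_le_mul_of_nonneg_left hq1 hxa
    have key : (a:ℤ) * ((x:ℤ) - 1) + (x:ℤ) * a * ((v:ℤ) - 2) < (n:ℤ) - 1 := by
      have e : (x:ℤ) * (((a:ℤ) + 1) * ((v:ℤ) - 1) + 1) - 1
          - ((a:ℤ) * ((x:ℤ) - 1) + (x:ℤ) * a * ((v:ℤ) - 2)) = (x:ℤ) * v + a - 1 := by ring
      rw [hnZ]; linarith [e, hxv]
    linarith [hf.le]
  have hlb : -2 * ((n:ℤ) - 1) < f := by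
    have t1 : 0 ≤ (a:ℤ) * r := mul_nonneg (by linarith) hr0
    have t2 : 0 ≤ (x:ℤ) * a * q := mul_nonneg hxa hq0
    have t3 : ((x:ℤ) * v - 1) * p ≤ ((x:ℤ) * v - 1) * ((a:ℤ) + 1) :=
      mul_le_mul_of_nonneg_left hp1 (by linarith)
    have t4 : (2:ℤ) * ((x:ℤ) * a) ≤ (x:ℤ) * a * v := by nlinarith
    have key : -2 * ((n:ℤ) - 1) < -(((x:ℤ) * v - 1) * ((a:ℤ) + 1)) := by
      have e : -(((x:ℤ) * v - 1) * ((a:ℤ) + 1))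
          - (-2 * ((x:ℤ) * (((a:ℤ) + 1) * ((v:ℤ) - 1) + 1) - 1))
          = ((x:ℤ) * a * v - 2 * ((x:ℤ) * a)) + (x:ℤ) * v + a - 1 := by ring
      rw [hnZ]; linarith [e, hxv, t4]
    linarith [hf.le]
  have hm : (0:ℤ) < (n:ℤ) - 1 := by
    have t : (0:ℤ) ≤ ((a:ℤ) + 1) * ((v:ℤ) - 1) := mul_nonneg (by linarith) (by linarith)
    have t2 : (3:ℤ) * 1 ≤ (x:ℤ) * (((a:ℤ) + 1) * ((v:ℤ) - 1) + 1) :=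
      mul_le_mul hx3 (by linarith) (by norm_num) (by linarith)
    rw [hnZ]; linarith
  refine ⟨⟨hlb, hub⟩, ?_⟩
  have h1 : -2 ≤ f / ((n:ℤ) - 1) := by
    rw [Int.le_ediv_iff_mul_le hm]; linarith
  have h2 : f / ((n:ℤ) - 1) < 1 := by
    rw [Int.ediv_lt_iff_lt_mul hm]; linarith
  omega
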